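/- Let H = \mathbb{Q}[u_1,u_2,\theta]/(\theta^3 - u_1 u_2), and let I be the formal series in H((z^{-1}))[[x_0, x_1, t_1, t_2]] given by I = z \exp((u_1 t_1 + u_2 t_2)/z) \sum_{(k_0,k_1) \in \mathbb{N}^2} \frac{x_0^{k_0} x_1^{k_1}}{z^{k_0+k_1} k_0! k_1!} \theta^{k_1 \bmod 3} \prod_{b} (u_1+bz)(u_2+bz), where the product runs over the rationals b with -k_1/3 < b \le 0 and b + k_1/3 \in \mathbb{Z}. Then the coefficient of z^k in I vanishes for every k \ge 2, the coefficient of z^1 equals 1, and the coefficient of z^0 equals t_1 u_1 + t_2 u_2 + x_0 + x_1 \theta. -/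

import Mathlib

open Finset

set_option synthInstance.maxHeartbeats 1000000
set_option maxHeartbeats 1000000

noncomputable section

/-- `H = ℚ[u₁,u₂,θ]/(θ³ - u₁u₂)`, the `𝕋`-equivariant Chen–Ruan cohomology of `⅓(1,1)`. -/
abbrev H8 : Type :=
  MvPolynomial (Fin 3) ℚ ⧸
    Ideal.span {(MvPolynomial.X 2 : MvPolynomial (Fin 3) ℚ) ^ 3 -
      MvPolynomial.X 0 * MvPolynomial.X 1}

def u₁ : H8 := Ideal.Quotient.mk _ (MvPolynomial.X 0)
def u₂ : H8 := Ideal.Quotient.mk _ (MvPolynomial.X 1)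
def θ : H8 := Ideal.Quotient.mk _ (MvPolynomial.X 2)

/-- The element `z` of `H((z⁻¹)) = LaurentSeries H` (Laurent series in `w = z⁻¹`,
so `z = w⁻¹` is the single series with exponent `-1`). -/
def zz : LaurentSeries H8 := HahnSeries.single (-1 : ℤ) 1

/-- The element `z⁻¹` of `H((z⁻¹))`. -/
def zinv : LaurentSeries H8 := HahnSeries.single (1 : ℤ) 1

/-- The inclusion `H → H((z⁻¹))`. -/
abbrev CLS : H8 →+* LaurentSeries H8 := HahnSeries.C

/-- The `S`-extended `I`-function of `⅓(1,1)` as an element of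
`H((z⁻¹))[[x₀, x₁, t₁, t₂]]` (variables `0 ↦ x₀`, `1 ↦ x₁`, `2 ↦ t₁`, `3 ↦ t₂`),
given by its coefficients: the coefficient of `x₀^{k₀} x₁^{k₁} t₁^{a₁} t₂^{a₂}` in
`z exp((u₁t₁+u₂t₂)/z) ∑_{(k₀,k₁)} x₀^{k₀}x₁^{k₁}/(z^{k₀+k₁}k₀!k₁!) θ^{k₁ mod 3}
  ∏_{b} (u₁+bz)(u₂+bz)`
(the product over rationals `b` with `-k₁/3 < b ≤ 0` and `b + k₁/3 ∈ ℤ`, i.e. over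
`b = j - k₁/3`, `j = 1, …, ⌊k₁/3⌋`), namely
`z (u₁/z)^{a₁} (u₂/z)^{a₂} / (a₁! a₂! z^{k₀+k₁} k₀! k₁!) θ^{k₁ mod 3} ∏_b ⋯`. -/
def I8 : MvPowerSeries (Fin 4) (LaurentSeries H8) := fun m =>
  let k₀ := m 0; let k₁ := m 1; let a₁ := m 2; let a₂ := m 3
  (@algebraMap ℚ (LaurentSeries H8) _ HahnSeries.instSemiring _
      (((k₀.factorial * k₁.factorial * a₁.factorial * a₂.factorial : ℕ) : ℚ)⁻¹)) *
    zz * zinv ^ (k₀ + k₁) * (CLS u₁ * zinv) ^ a₁ * (CLS u₂ * zinv) ^ a₂ *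
    CLS (θ ^ (k₁ % 3)) *
    ∏ j ∈ Finset.Icc 1 (k₁ / 3),
      ((CLS u₁ + ((j : ℚ) - (k₁ : ℚ) / 3) • zz) * (CLS u₂ + ((j : ℚ) - (k₁ : ℚ) / 3) • zz))

/-- The coefficient of `z^k` in a series in `H((z⁻¹))[[x₀,x₁,t₁,t₂]]`, as an element of
`H[[x₀,x₁,t₁,t₂]]`. -/
def zCoeff (I : MvPowerSeries (Fin 4) (LaurentSeries H8)) (k : ℤ) :
    MvPowerSeries (Fin 4) H8 := fun m =>
  (MvPowerSeries.coeff m I).coeff (-k)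

/-! ### Auxiliary machinery: lower/upper support bounds and leading coefficients -/

/-- `Pge n x`: all coefficients of `x` below `n` vanish. -/
def Pge (n : ℤ) (x : LaurentSeries H8) : Prop := ∀ e : ℤ, e < n → x.coeff e = 0

/-- `Ple n x`: all coefficients of `x` above `n` vanish. -/
def Ple (n : ℤ) (x : LaurentSeries H8) : Prop := ∀ e : ℤ, n < e → x.coeff e = 0

/-- `Co n c x`: all coefficients of `x` below `n` vanish and the one at `n` equals `c`. -/
def Co (n : ℤ) (c : H8) (x : LaurentSeries H8) : Prop := Pge n x ∧ x.coeff n = c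

lemma Pge.mono {n n' : ℤ} {x : LaurentSeries H8} (h : Pge n x) (hle : n' ≤ n) : Pge n' x :=
  fun e he => h e (lt_of_lt_of_le he hle)

lemma Ple.mono {n n' : ℤ} {x : LaurentSeries H8} (h : Ple n x) (hle : n ≤ n') : Ple n' x :=
  fun e he => h e (lt_of_le_of_lt hle he)

lemma Pge.mul {m n : ℤ} {x y : LaurentSeries H8} (hx : Pge m x) (hy : Pge n y) :
    Pge (m + n) (x * y) := by
  intro e he
  rw [HahnSeries.coeff_mul]
  refine Finset.sum_eq_zero fun ij hij => ?_
  rw [mem_addAntidiagonal] at hij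
  rcases lt_or_ge ij.1 m with h1 | h1
  · rw [hx _ h1, zero_mul]
  · rw [hy _ (by omega), mul_zero]

lemma Ple.mul {m n : ℤ} {x y : LaurentSeries H8} (hx : Ple m x) (hy : Ple n y) :
    Ple (m + n) (x * y) := by
  intro e he
  rw [HahnSeries.coeff_mul]
  refine Finset.sum_eq_zero fun ij hij => ?_
  rw [mem_addAntidiagonal] at hij
  rcases lt_or_ge m ij.1 with h1 | h1
  · rw [hx _ h1, zero_mul]
  · rw [hy _ (by omega), mul_zero]

lemma Pge.add {n : ℤ} {x y : LaurentSeries H8} (hx : Pge n x) (hy : Pge n y) :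
    Pge n (x + y) := fun e he => by
  rw [HahnSeries.coeff_add, hx e he, hy e he, add_zero]

lemma Ple.add {n : ℤ} {x y : LaurentSeries H8} (hx : Ple n x) (hy : Ple n y) :
    Ple n (x + y) := fun e he => by
  rw [HahnSeries.coeff_add, hx e he, hy e he, add_zero]

lemma Pge.single (a : ℤ) (r : H8) : Pge a (HahnSeries.single a r) := fun e he => by
  rw [HahnSeries.coeff_single_of_ne (ne_of_lt he)]

lemma Ple.single (a : ℤ) (r : H8) : Ple a (HahnSeries.single a r) := fun e he => by
  rw [HahnSeries.coeff_single_of_ne (ne_of_gt he)]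

lemma Pge.C (r : H8) : Pge 0 (CLS r) := Pge.single 0 r

lemma Ple.C (r : H8) : Ple 0 (CLS r) := Ple.single 0 r

lemma Pge.smul {n : ℤ} {x : LaurentSeries H8} (c : ℚ) (hx : Pge n x) : Pge n (c • x) :=
  fun e he => by rw [HahnSeries.coeff_smul, hx e he, smul_zero]

lemma Ple.smul {n : ℤ} {x : LaurentSeries H8} (c : ℚ) (hx : Ple n x) : Ple n (c • x) :=
  fun e he => by rw [HahnSeries.coeff_smul, hx e he, smul_zero]

lemma Pge.pow {n : ℤ} {x : LaurentSeries H8} (hx : Pge n x) (k : ℕ) : Pge (n * k) (x ^ k) := by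
  induction k with
  | zero => simpa using Pge.single 0 1
  | succ k ih =>
      rw [pow_succ]
      exact (ih.mul hx).mono (le_of_eq (by push_cast; ring))

lemma Ple.pow {n : ℤ} {x : LaurentSeries H8} (hx : Ple n x) (k : ℕ) : Ple (n * k) (x ^ k) := by
  induction k with
  | zero => simpa using Ple.single 0 1
  | succ k ih =>
      rw [pow_succ]
      exact (ih.mul hx).mono (le_of_eq (by push_cast; ring))

lemma Pge.prod {n : ℤ} {s : Finset ℕ} {f : ℕ → LaurentSeries H8}
    (h : ∀ i ∈ s, Pge n (f i)) : Pge (n * s.card) (∏ i ∈ s, f i) := by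
  induction s using Finset.induction with
  | empty => simpa using Pge.single 0 1
  | @insert a s ha ih =>
      rw [Finset.prod_insert ha, Finset.card_insert_of_notMem ha]
      exact (((h a (Finset.mem_insert_self a s)).mul
        (ih fun i hi => h i (Finset.mem_insert_of_mem hi))).mono (le_of_eq (by push_cast; ring)))

lemma Ple.prod {n : ℤ} {s : Finset ℕ} {f : ℕ → LaurentSeries H8}
    (h : ∀ i ∈ s, Ple n (f i)) : Ple (n * s.card) (∏ i ∈ s, f i) := by
  induction s using Finset.induction with
  | empty => simpa using Ple.single 0 1
  | @insert a s ha ih =>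
      rw [Finset.prod_insert ha, Finset.card_insert_of_notMem ha]
      exact (((h a (Finset.mem_insert_self a s)).mul
        (ih fun i hi => h i (Finset.mem_insert_of_mem hi))).mono (le_of_eq (by push_cast; ring)))

lemma Co.congr {n n' : ℤ} {c c' : H8} {x : LaurentSeries H8} (h : Co n c x)
    (hn : n = n') (hc : c = c') : Co n' c' x := hn ▸ hc ▸ h

lemma Co.single (a : ℤ) (r : H8) : Co a r (HahnSeries.single a r) :=
  ⟨Pge.single a r, HahnSeries.coeff_single_same a r⟩

lemma Co.C (r : H8) : Co 0 r (CLS r) :=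
  ⟨Pge.C r, by rw [HahnSeries.C_apply, HahnSeries.coeff_single_same]⟩

lemma Co.one : Co 0 1 (1 : LaurentSeries H8) :=
  ⟨fun e he => by rw [← HahnSeries.single_zero_one, HahnSeries.coeff_single_of_ne (ne_of_lt he)],
   by rw [← HahnSeries.single_zero_one, HahnSeries.coeff_single_same]⟩

lemma Co.mul {m n : ℤ} {c d : H8} {x y : LaurentSeries H8} (hx : Co m c x) (hy : Co n d y) :
    Co (m + n) (c * d) (x * y) := by
  obtain ⟨hxp, hxc⟩ := hx
  obtain ⟨hyp, hyc⟩ := hy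
  refine ⟨hxp.mul hyp, ?_⟩
  rw [HahnSeries.coeff_mul, Finset.sum_eq_single ((m, n) : ℤ × ℤ)]
  · rw [hxc, hyc]
  · intro ij hij hne
    rw [mem_addAntidiagonal] at hij
    rcases lt_trichotomy ij.1 m with h | h | h
    · rw [hxp _ h, zero_mul]
    · exact absurd (Prod.ext h (by omega)) hne
    · rw [hyp _ (by omega), mul_zero]
  · intro h
    rw [mem_addAntidiagonal] at h
    push_neg at h
    show x.coeff m * y.coeff n = 0
    by_cases hx0 : x.coeff m = 0
    · rw [hx0, zero_mul]
    · by_cases hy0 : y.coeff n = 0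
      · rw [hy0, mul_zero]
      · exact absurd rfl (h hx0 hy0)

lemma Co.smul {n : ℤ} {c : H8} {x : LaurentSeries H8} (q : ℚ) (h : Co n c x) :
    Co n (q • c) (q • x) :=
  ⟨Pge.smul q h.1, by rw [HahnSeries.coeff_smul, h.2]⟩

lemma Co.add_pge {n n' : ℤ} {c : H8} {x y : LaurentSeries H8} (hx : Pge n' x) (hy : Co n c y)
    (hlt : n < n') : Co n c (x + y) := by
  refine ⟨(hx.mono hlt.le).add hy.1, ?_⟩
  rw [HahnSeries.coeff_add, hx n hlt, hy.2, zero_add]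

lemma Co.pow {n : ℤ} {c : H8} {x : LaurentSeries H8} (h : Co n c x) (k : ℕ) :
    Co (n * k) (c ^ k) (x ^ k) := by
  induction k with
  | zero =>
      simp only [Nat.cast_zero, mul_zero, pow_zero]
      exact Co.one
  | succ k ih =>
      have := (ih.mul h).congr (show n * (k : ℤ) + n = n * ((k + 1 : ℕ) : ℤ) by push_cast; ring)
        (pow_succ c k).symm
      exact this

lemma Co.prod {n : ℤ} {s : Finset ℕ} {f : ℕ → LaurentSeries H8} {c : ℕ → H8}
    (h : ∀ i ∈ s, Co n (c i) (f i)) :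
    Co (n * s.card) (∏ i ∈ s, c i) (∏ i ∈ s, f i) := by
  induction s using Finset.induction with
  | empty => simpa using Co.one
  | @insert a s ha ih =>
      rw [Finset.prod_insert ha, Finset.prod_insert ha, Finset.card_insert_of_notMem ha]
      exact (((h a (Finset.mem_insert_self a s)).mul
        (ih fun i hi => h i (Finset.mem_insert_of_mem hi))).congr (by push_cast; ring) rfl)

lemma algebraMap_LS (c : ℚ) :
    @algebraMap ℚ (LaurentSeries H8) _ HahnSeries.instSemiring _ c = HahnSeries.single (0 : ℤ) (algebraMap ℚ H8 c) := by
  rw [HahnSeries.algebraMap_apply', PowerSeries.algebraMap_apply, HahnSeries.ofPowerSeries_C,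
    HahnSeries.C_apply]

/-- Lower bound on the support of the coefficients of `I8`. -/
lemma I8_Pge (m : Fin 4 →₀ ℕ) :
    Pge ((m 0 + m 1 + m 2 + m 3 : ℤ) - 2 * (m 1 / 3 : ℕ) - 1) (I8 m) := by
  have h0 : Pge 0 (@algebraMap ℚ (LaurentSeries H8) _ HahnSeries.instSemiring _
      ((((m 0).factorial * (m 1).factorial * (m 2).factorial * (m 3).factorial : ℕ) : ℚ)⁻¹)) := by
    rw [algebraMap_LS]
    exact Pge.single _ _
  have hz : Pge (-1) zz := Pge.single _ _
  have hzi : Pge ((m 0 + m 1 : ℕ) : ℤ) (zinv ^ (m 0 + m 1)) :=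
    ((Pge.single 1 (1 : H8)).pow (m 0 + m 1)).mono (le_of_eq (by push_cast; ring))
  have hu1 : Pge ((m 2 : ℕ) : ℤ) ((CLS u₁ * zinv) ^ m 2) :=
    (((Pge.C u₁).mul (Pge.single 1 (1 : H8))).pow (m 2)).mono (le_of_eq (by push_cast; ring))
  have hu2 : Pge ((m 3 : ℕ) : ℤ) ((CLS u₂ * zinv) ^ m 3) :=
    (((Pge.C u₂).mul (Pge.single 1 (1 : H8))).pow (m 3)).mono (le_of_eq (by push_cast; ring))
  have hθ : Pge 0 (CLS (θ ^ (m 1 % 3))) := Pge.C _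
  have hprod : Pge (-2 * ((m 1 / 3 : ℕ) : ℤ))
      (∏ j ∈ Finset.Icc 1 (m 1 / 3),
        ((CLS u₁ + ((j : ℚ) - (m 1 : ℚ) / 3) • zz) *
          (CLS u₂ + ((j : ℚ) - (m 1 : ℚ) / 3) • zz))) := by
    have hf : ∀ i ∈ Finset.Icc 1 (m 1 / 3), Pge (-2)
        ((CLS u₁ + ((i : ℚ) - (m 1 : ℚ) / 3) • zz) *
          (CLS u₂ + ((i : ℚ) - (m 1 : ℚ) / 3) • zz)) := by
      intro i _
      have h1 : Pge (-1) (CLS u₁ + ((i : ℚ) - (m 1 : ℚ) / 3) • zz) :=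
        ((Pge.C u₁).mono (by norm_num)).add (Pge.smul _ (Pge.single _ _))
      have h2 : Pge (-1) (CLS u₂ + ((i : ℚ) - (m 1 : ℚ) / 3) • zz) :=
        ((Pge.C u₂).mono (by norm_num)).add (Pge.smul _ (Pge.single _ _))
      exact (h1.mul h2).mono (by norm_num)
    have := Pge.prod hf
    rwa [Nat.card_Icc, Nat.add_sub_cancel] at this
  exact (((((((h0.mul hz).mul hzi).mul hu1).mul hu2).mul hθ).mul hprod)).mono
    (le_of_eq (by push_cast; ring))

/-- Upper bound on the support of the coefficients of `I8`. -/
lemma I8_Ple (m : Fin 4 →₀ ℕ) :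
    Ple ((m 0 + m 1 + m 2 + m 3 : ℤ) - 1) (I8 m) := by
  have h0 : Ple 0 (@algebraMap ℚ (LaurentSeries H8) _ HahnSeries.instSemiring _
      ((((m 0).factorial * (m 1).factorial * (m 2).factorial * (m 3).factorial : ℕ) : ℚ)⁻¹)) := by
    rw [algebraMap_LS]
    exact Ple.single _ _
  have hz : Ple (-1) zz := Ple.single _ _
  have hzi : Ple ((m 0 + m 1 : ℕ) : ℤ) (zinv ^ (m 0 + m 1)) :=
    ((Ple.single 1 (1 : H8)).pow (m 0 + m 1)).mono (le_of_eq (by push_cast; ring))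
  have hu1 : Ple ((m 2 : ℕ) : ℤ) ((CLS u₁ * zinv) ^ m 2) :=
    (((Ple.C u₁).mul (Ple.single 1 (1 : H8))).pow (m 2)).mono (le_of_eq (by push_cast; ring))
  have hu2 : Ple ((m 3 : ℕ) : ℤ) ((CLS u₂ * zinv) ^ m 3) :=
    (((Ple.C u₂).mul (Ple.single 1 (1 : H8))).pow (m 3)).mono (le_of_eq (by push_cast; ring))
  have hθ : Ple 0 (CLS (θ ^ (m 1 % 3))) := Ple.C _
  have hprod : Ple 0
      (∏ j ∈ Finset.Icc 1 (m 1 / 3),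
        ((CLS u₁ + ((j : ℚ) - (m 1 : ℚ) / 3) • zz) *
          (CLS u₂ + ((j : ℚ) - (m 1 : ℚ) / 3) • zz))) := by
    have hf : ∀ i ∈ Finset.Icc 1 (m 1 / 3), Ple 0
        ((CLS u₁ + ((i : ℚ) - (m 1 : ℚ) / 3) • zz) *
          (CLS u₂ + ((i : ℚ) - (m 1 : ℚ) / 3) • zz)) := by
      intro i _
      have h1 : Ple 0 (CLS u₁ + ((i : ℚ) - (m 1 : ℚ) / 3) • zz) :=
        (Ple.C u₁).add ((Ple.smul _ (Ple.single _ _)).mono (by norm_num))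
      have h2 : Ple 0 (CLS u₂ + ((i : ℚ) - (m 1 : ℚ) / 3) • zz) :=
        (Ple.C u₂).add ((Ple.smul _ (Ple.single _ _)).mono (by norm_num))
      exact (h1.mul h2).mono (by norm_num)
    have := Ple.prod hf
    simpa using this
  exact (((((((h0.mul hz).mul hzi).mul hu1).mul hu2).mul hθ).mul hprod)).mono
    (le_of_eq (by push_cast; ring))

/-- Exact leading coefficient of `I8 m`. -/
lemma I8_Co (m : Fin 4 →₀ ℕ) :
    Co ((m 0 + m 1 + m 2 + m 3 : ℤ) - 2 * (m 1 / 3 : ℕ) - 1)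
      (algebraMap ℚ H8 ((((m 0).factorial * (m 1).factorial * (m 2).factorial *
          (m 3).factorial : ℕ) : ℚ)⁻¹) * 1 * 1 ^ (m 0 + m 1) * (u₁ * 1) ^ m 2 *
        (u₂ * 1) ^ m 3 * θ ^ (m 1 % 3) *
        ∏ j ∈ Finset.Icc 1 (m 1 / 3),
          ((((j : ℚ) - (m 1 : ℚ) / 3) • (1 : H8)) * (((j : ℚ) - (m 1 : ℚ) / 3) • (1 : H8))))
      (I8 m) := by
  have h0 : Co 0 (algebraMap ℚ H8 ((((m 0).factorial * (m 1).factorial * (m 2).factorial *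
      (m 3).factorial : ℕ) : ℚ)⁻¹)) (@algebraMap ℚ (LaurentSeries H8) _ HahnSeries.instSemiring _
      ((((m 0).factorial * (m 1).factorial * (m 2).factorial * (m 3).factorial : ℕ) : ℚ)⁻¹)) := by
    rw [algebraMap_LS]
    exact Co.single _ _
  have hz : Co (-1) (1 : H8) zz := Co.single _ _
  have hzi : Co ((m 0 + m 1 : ℕ) : ℤ) ((1 : H8) ^ (m 0 + m 1)) (zinv ^ (m 0 + m 1)) :=
    ((Co.single 1 (1 : H8)).pow (m 0 + m 1)).congr (by push_cast; ring) rfl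
  have hu1 : Co ((m 2 : ℕ) : ℤ) ((u₁ * 1) ^ m 2) ((CLS u₁ * zinv) ^ m 2) :=
    (((Co.C u₁).mul (Co.single 1 (1 : H8))).pow (m 2)).congr (by push_cast; ring) rfl
  have hu2 : Co ((m 3 : ℕ) : ℤ) ((u₂ * 1) ^ m 3) ((CLS u₂ * zinv) ^ m 3) :=
    (((Co.C u₂).mul (Co.single 1 (1 : H8))).pow (m 3)).congr (by push_cast; ring) rfl
  have hθ : Co 0 (θ ^ (m 1 % 3)) (CLS (θ ^ (m 1 % 3))) := Co.C _
  have hprod : Co (-2 * ((m 1 / 3 : ℕ) : ℤ))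
      (∏ j ∈ Finset.Icc 1 (m 1 / 3),
        ((((j : ℚ) - (m 1 : ℚ) / 3) • (1 : H8)) * (((j : ℚ) - (m 1 : ℚ) / 3) • (1 : H8))))
      (∏ j ∈ Finset.Icc 1 (m 1 / 3),
        ((CLS u₁ + ((j : ℚ) - (m 1 : ℚ) / 3) • zz) *
          (CLS u₂ + ((j : ℚ) - (m 1 : ℚ) / 3) • zz))) := by
    have hf : ∀ i ∈ Finset.Icc 1 (m 1 / 3), Co (-2)
        ((((i : ℚ) - (m 1 : ℚ) / 3) • (1 : H8)) * (((i : ℚ) - (m 1 : ℚ) / 3) • (1 : H8)))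
        ((CLS u₁ + ((i : ℚ) - (m 1 : ℚ) / 3) • zz) *
          (CLS u₂ + ((i : ℚ) - (m 1 : ℚ) / 3) • zz)) := by
      intro i _
      have h1 : Co (-1) (((i : ℚ) - (m 1 : ℚ) / 3) • (1 : H8))
          (CLS u₁ + ((i : ℚ) - (m 1 : ℚ) / 3) • zz) :=
        Co.add_pge (Pge.C u₁) (Co.smul _ hz) (by norm_num)
      have h2 : Co (-1) (((i : ℚ) - (m 1 : ℚ) / 3) • (1 : H8))
          (CLS u₂ + ((i : ℚ) - (m 1 : ℚ) / 3) • zz) :=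
        Co.add_pge (Pge.C u₂) (Co.smul _ hz) (by norm_num)
      exact (h1.mul h2).congr (show (-1 : ℤ) + -1 = -2 by norm_num) rfl
    exact (Co.prod hf).congr (by rw [Nat.card_Icc, Nat.add_sub_cancel]) rfl
  exact (((((((h0.mul hz).mul hzi).mul hu1).mul hu2).mul hθ).mul hprod)).congr
    (by push_cast; ring) rfl

lemma Icc_one_zero : Finset.Icc 1 0 = (∅ : Finset ℕ) := rfl

lemma fin4_ext {m : Fin 4 →₀ ℕ} {m' : Fin 4 →₀ ℕ} (h0 : m 0 = m' 0) (h1 : m 1 = m' 1)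
    (h2 : m 2 = m' 2) (h3 : m 3 = m' 3) : m = m' := by
  refine Finsupp.ext fun j => ?_
  fin_cases j
  · exact h0
  · exact h1
  · exact h2
  · exact h3

/-- The coefficient of `z^k` in `I` vanishes for `k ≥ 2`, the coefficient of `z¹`
equals `1`, and the coefficient of `z⁰` equals `t₁u₁ + t₂u₂ + x₀ + x₁θ`. -/
theorem statement8 :
    (∀ k : ℤ, 2 ≤ k → zCoeff I8 k = 0) ∧
    zCoeff I8 1 = 1 ∧
    zCoeff I8 0 =
      MvPowerSeries.X 2 * MvPowerSeries.C (σ := Fin 4) (R := H8) u₁ +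
        MvPowerSeries.X 3 * MvPowerSeries.C (σ := Fin 4) (R := H8) u₂ +
        MvPowerSeries.X 0 + MvPowerSeries.X 1 * MvPowerSeries.C (σ := Fin 4) (R := H8) θ := by
  classical
  refine ⟨?_, ?_, ?_⟩
  · -- coefficients of z^k, k ≥ 2, vanish
    intro k hk
    funext m
    show (I8 m).coeff (-k) = 0
    apply I8_Pge m
    omega
  · -- coefficient of z^1 is 1
    funext m
    show (I8 m).coeff (-1) = MvPowerSeries.coeff m 1
    rw [MvPowerSeries.coeff_one]
    by_cases hm : m = 0
    · subst hm
      rw [if_pos rfl]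
      have h := (I8_Co 0).2
      simp only [Finsupp.coe_zero, Pi.zero_apply] at h
      norm_num [Icc_one_zero] at h
      try exact h
    · rw [if_neg hm]
      apply I8_Pge m
      have h04 : m 0 ≠ 0 ∨ m 1 ≠ 0 ∨ m 2 ≠ 0 ∨ m 3 ≠ 0 := by
        by_contra h
        push_neg at h
        obtain ⟨h0, h1, h2, h3⟩ := h
        exact hm (fin4_ext h0 h1 h2 h3)
      omega
  · -- coefficient of z^0
    funext m
    show (I8 m).coeff 0 = MvPowerSeries.coeff m
        (MvPowerSeries.X 2 * MvPowerSeries.C (σ := Fin 4) (R := H8) u₁ +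
          MvPowerSeries.X 3 * MvPowerSeries.C (σ := Fin 4) (R := H8) u₂ +
          MvPowerSeries.X 0 + MvPowerSeries.X 1 * MvPowerSeries.C (σ := Fin 4) (R := H8) θ)
    have hRHS : MvPowerSeries.coeff m
        (MvPowerSeries.X 2 * MvPowerSeries.C (σ := Fin 4) (R := H8) u₁ +
          MvPowerSeries.X 3 * MvPowerSeries.C (σ := Fin 4) (R := H8) u₂ +
          MvPowerSeries.X 0 + MvPowerSeries.X 1 * MvPowerSeries.C (σ := Fin 4) (R := H8) θ) =
        (if m = Finsupp.single 2 1 then u₁ else 0) +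
        (if m = Finsupp.single 3 1 then u₂ else 0) +
        (if m = Finsupp.single 0 1 then 1 else 0) +
        (if m = Finsupp.single 1 1 then θ else 0) := by
      rw [map_add, map_add, map_add,
        mul_comm (MvPowerSeries.X 2) (MvPowerSeries.C (σ := Fin 4) (R := H8) u₁),
        mul_comm (MvPowerSeries.X 3) (MvPowerSeries.C (σ := Fin 4) (R := H8) u₂),
        mul_comm (MvPowerSeries.X 1) (MvPowerSeries.C (σ := Fin 4) (R := H8) θ),
        MvPowerSeries.coeff_C_mul, MvPowerSeries.coeff_C_mul, MvPowerSeries.coeff_C_mul,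
        MvPowerSeries.coeff_X, MvPowerSeries.coeff_X, MvPowerSeries.coeff_X,
        MvPowerSeries.coeff_X]
      split_ifs <;> simp
    rw [hRHS]
    by_cases hm0 : m = 0
    · subst hm0
      rw [if_neg (by simp [eq_comm, Finsupp.single_eq_zero]),
        if_neg (by simp [eq_comm, Finsupp.single_eq_zero]),
        if_neg (by simp [eq_comm, Finsupp.single_eq_zero]),
        if_neg (by simp [eq_comm, Finsupp.single_eq_zero])]
      have h := I8_Ple 0
      simp only [Finsupp.coe_zero, Pi.zero_apply] at h
      rw [h 0 (by norm_num)]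
      norm_num
    by_cases h2 : m = Finsupp.single 2 1
    · subst h2
      rw [if_pos rfl, if_neg (by simp [Finsupp.single_eq_single_iff]),
        if_neg (by simp [Finsupp.single_eq_single_iff]),
        if_neg (by simp [Finsupp.single_eq_single_iff])]
      have h := (I8_Co (Finsupp.single 2 1)).2
      simp only [Finsupp.single_eq_same,
        Finsupp.single_eq_of_ne' (show (2 : Fin 4) ≠ 0 by decide),
        Finsupp.single_eq_of_ne' (show (2 : Fin 4) ≠ 1 by decide),
        Finsupp.single_eq_of_ne' (show (2 : Fin 4) ≠ 3 by decide)] at h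
      norm_num [Icc_one_zero] at h
      rw [h]
      norm_num
    by_cases h3 : m = Finsupp.single 3 1
    · subst h3
      rw [if_pos rfl, if_neg (by simp [Finsupp.single_eq_single_iff]),
        if_neg (by simp [Finsupp.single_eq_single_iff]),
        if_neg (by simp [Finsupp.single_eq_single_iff])]
      have h := (I8_Co (Finsupp.single 3 1)).2
      simp only [Finsupp.single_eq_same,
        Finsupp.single_eq_of_ne' (show (3 : Fin 4) ≠ 0 by decide),
        Finsupp.single_eq_of_ne' (show (3 : Fin 4) ≠ 1 by decide),
        Finsupp.single_eq_of_ne' (show (3 : Fin 4) ≠ 2 by decide)] at h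
      norm_num [Icc_one_zero] at h
      rw [h]
      norm_num
    by_cases h0 : m = Finsupp.single 0 1
    · subst h0
      rw [if_pos rfl, if_neg (by simp [Finsupp.single_eq_single_iff]),
        if_neg (by simp [Finsupp.single_eq_single_iff]),
        if_neg (by simp [Finsupp.single_eq_single_iff])]
      have h := (I8_Co (Finsupp.single 0 1)).2
      simp only [Finsupp.single_eq_same,
        Finsupp.single_eq_of_ne' (show (0 : Fin 4) ≠ 1 by decide),
        Finsupp.single_eq_of_ne' (show (0 : Fin 4) ≠ 2 by decide),
        Finsupp.single_eq_of_ne' (show (0 : Fin 4) ≠ 3 by decide)] at h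
      norm_num [Icc_one_zero] at h
      rw [h]
      norm_num
    by_cases h1 : m = Finsupp.single 1 1
    · subst h1
      rw [if_pos rfl, if_neg (by simp [Finsupp.single_eq_single_iff]),
        if_neg (by simp [Finsupp.single_eq_single_iff]),
        if_neg (by simp [Finsupp.single_eq_single_iff])]
      have h := (I8_Co (Finsupp.single 1 1)).2
      simp only [Finsupp.single_eq_same,
        Finsupp.single_eq_of_ne' (show (1 : Fin 4) ≠ 0 by decide),
        Finsupp.single_eq_of_ne' (show (1 : Fin 4) ≠ 2 by decide),
        Finsupp.single_eq_of_ne' (show (1 : Fin 4) ≠ 3 by decide)] at h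
      norm_num [Icc_one_zero] at h
      rw [h]
      norm_num
    by_cases h13 : m = Finsupp.single 1 3
    · subst h13
      rw [if_neg (by simp [Finsupp.single_eq_single_iff]),
        if_neg (by simp [Finsupp.single_eq_single_iff]),
        if_neg (by simp [Finsupp.single_eq_single_iff]),
        if_neg (by simp [Finsupp.single_eq_single_iff])]
      have h := (I8_Co (Finsupp.single 1 3)).2
      simp only [Finsupp.single_eq_same,
        Finsupp.single_eq_of_ne' (show (1 : Fin 4) ≠ 0 by decide),
        Finsupp.single_eq_of_ne' (show (1 : Fin 4) ≠ 2 by decide),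
        Finsupp.single_eq_of_ne' (show (1 : Fin 4) ≠ 3 by decide)] at h
      norm_num [Finset.Icc_self] at h
      rw [h]
      norm_num
    · -- generic case: the lower bound exceeds 0
      rw [if_neg h2, if_neg h3, if_neg h0, if_neg h1]
      have hb : 2 ≤ (m 0 : ℤ) + m 1 + m 2 + m 3 - 2 * (m 1 / 3 : ℕ) := by
        by_contra hb
        push_neg at hb
        have hcases : (m 0 = 0 ∧ m 1 = 0 ∧ m 2 = 0 ∧ m 3 = 0) ∨
            (m 0 = 1 ∧ m 1 = 0 ∧ m 2 = 0 ∧ m 3 = 0) ∨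
            (m 0 = 0 ∧ m 1 = 1 ∧ m 2 = 0 ∧ m 3 = 0) ∨
            (m 0 = 0 ∧ m 1 = 3 ∧ m 2 = 0 ∧ m 3 = 0) ∨
            (m 0 = 0 ∧ m 1 = 0 ∧ m 2 = 1 ∧ m 3 = 0) ∨
            (m 0 = 0 ∧ m 1 = 0 ∧ m 2 = 0 ∧ m 3 = 1) := by omega
        rcases hcases with ⟨e0, e1, e2, e3⟩ | ⟨e0, e1, e2, e3⟩ | ⟨e0, e1, e2, e3⟩ |
          ⟨e0, e1, e2, e3⟩ | ⟨e0, e1, e2, e3⟩ | ⟨e0, e1, e2, e3⟩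
        · exact hm0 (fin4_ext (by simpa using e0) (by simpa using e1) (by simpa using e2)
            (by simpa using e3))
        · exact h0 (fin4_ext (by simp [e0]) (by simp [e1]) (by simp [e2]) (by simp [e3]))
        · exact h1 (fin4_ext (by simp [e0]) (by simp [e1]) (by simp [e2]) (by simp [e3]))
        · exact h13 (fin4_ext (by simp [e0]) (by simp [e1]) (by simp [e2]) (by simp [e3]))
        · exact h2 (fin4_ext (by simp [e0]) (by simp [e1]) (by simp [e2]) (by simp [e3]))
        · exact h3 (fin4_ext (by simp [e0]) (by simp [e1]) (by simp [e2]) (by simp [e3]))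
      rw [I8_Pge m 0 (by omega)]
      norm_num

end
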